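/- Let ξ be a real random variable with E[ξ | 𝒢] = 0 satisfying E[|ξ|^{2+ρ} e^{ξ⁺/ε} | 𝒢] ≤ ε^ρ E[ξ² | 𝒢] a.s. for some ρ ∈ (0,1] and ε > 0. Then for every λ with 0 ≤ λ ≤ 1/ε, E[e^{λξ} | 𝒢] ≤ 1 + (λ²/2 + λ^{2+ρ} ε^ρ) E[ξ² | 𝒢] ≤ 1 + 2(λε)² almost surely. -/

import Mathlib

open MeasureTheory

lemma exp_le_aux {ρ : ℝ} (hρ0 : 0 < ρ) (hρ1 : ρ ≤ 1) (x : ℝ) :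
    Real.exp x ≤ 1 + x + x^2/2 + |x|^(2+ρ) * Real.exp (max x 0) := by
  have hone : (1:ℝ) ≤ Real.exp (max x 0) := by
    rw [show (1:ℝ) = Real.exp 0 from (Real.exp_zero).symm]
    exact Real.exp_le_exp.2 (le_max_right _ _)
  rcases le_or_gt |x| 1 with h | h
  · have hb := Real.exp_bound h (n := 3) (by norm_num)
    have hsum : ∑ m ∈ Finset.range 3, x ^ m / m.factorial = 1 + x + x^2/2 := by
      simp [Finset.sum_range_succ, Nat.factorial]
    rw [hsum] at hb
    have h1 : Real.exp x - (1 + x + x^2/2) ≤ |x|^3 * (4/(6*3)) := by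
      have := (abs_le.1 hb).2
      simpa [Nat.factorial] using this
    have h2 : |x|^3 * (4/(6*3)) ≤ |x|^(2+ρ) := by
      rcases eq_or_lt_of_le (abs_nonneg x) with h0 | h0
      · rw [← h0]
        rw [Real.zero_rpow (by positivity)]
        norm_num
      · have h3 : |x|^(3:ℝ) ≤ |x|^(2+ρ) :=
          Real.rpow_le_rpow_of_exponent_ge h0 h (by linarith)
        calc |x|^3 * (4/(6*3)) ≤ |x|^3 := by nlinarith [pow_nonneg (abs_nonneg x) 3]
        _ = |x|^(3:ℝ) := by rw [← Real.rpow_natCast |x| 3]; norm_num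
        _ ≤ |x|^(2+ρ) := h3
    have h4 : |x|^(2+ρ) ≤ |x|^(2+ρ) * Real.exp (max x 0) := by
      nlinarith [Real.rpow_nonneg (abs_nonneg x) (2+ρ)]
    linarith
  · have hx2 : x^2 ≤ |x|^(2+ρ) := by
      have : |x|^((2:ℕ):ℝ) ≤ |x|^(2+ρ) :=
        Real.rpow_le_rpow_of_exponent_le h.le (by push_cast; linarith)
      rw [Real.rpow_natCast, sq_abs] at this
      exact this
    rcases le_or_gt x 0 with hx | hx
    · have hm : max x 0 = 0 := max_eq_right hx
      rw [hm, Real.exp_zero, mul_one]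
      have habs : |x| = -x := abs_of_nonpos hx
      have : |x| ≤ x^2 := by nlinarith [abs_nonneg x, sq_abs x]
      have he1 : Real.exp x ≤ 1 := by
        calc Real.exp x ≤ Real.exp 0 := Real.exp_le_exp.2 hx
        _ = 1 := Real.exp_zero
      nlinarith
    · have hm : max x 0 = x := max_eq_left hx.le
      rw [hm]
      have h1 : (1:ℝ) ≤ x^2 := by nlinarith [abs_of_pos hx]
      have : Real.exp x ≤ x^2 * Real.exp x := by
        nlinarith [Real.exp_pos x]
      have h2 : x^2 * Real.exp x ≤ |x|^(2+ρ) * Real.exp x := by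
        nlinarith [Real.exp_pos x]
      nlinarith [sq_nonneg x]

lemma young_aux {ρ ε : ℝ} (hρ0 : 0 < ρ) (hε : 0 < ε) (y : ℝ) :
    y^2 ≤ (2/(2+ρ)) * (|y|^(2+ρ) / ε^ρ) + (ρ/(2+ρ)) * ε^2 := by
  have h2ρ : (0:ℝ) < 2 + ρ := by linarith
  have hw1 : (0:ℝ) ≤ 2/(2+ρ) := by positivity
  have hw2 : (0:ℝ) ≤ ρ/(2+ρ) := by positivity
  have hp1 : (0:ℝ) ≤ |y|^(2+ρ) / ε^ρ := by positivity
  have hp2 : (0:ℝ) ≤ ε^2 := by positivity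
  have hw : 2/(2+ρ) + ρ/(2+ρ) = 1 := by field_simp
  have key := Real.geom_mean_le_arith_mean2_weighted hw1 hw2 hp1 hp2 hw
  have ha : (|y|^(2+ρ))^(2/(2+ρ)) = y^2 := by
    rw [← Real.rpow_mul (abs_nonneg y),
      show (2+ρ)*(2/(2+ρ)) = (2:ℝ) by field_simp,
      show ((2:ℝ)) = ((2:ℕ):ℝ) by norm_num, Real.rpow_natCast, sq_abs]
  have hb : ((ε:ℝ)^ρ)^(2/(2+ρ)) = ε^(ρ*(2/(2+ρ))) := (Real.rpow_mul hε.le _ _).symm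
  have hc : ((ε:ℝ)^2)^(ρ/(2+ρ)) = ε^(ρ*(2/(2+ρ))) := by
    rw [← Real.rpow_natCast ε 2, ← Real.rpow_mul hε.le]
    congr 1
    push_cast
    ring
  have hd : (|y|^(2+ρ) / ε^ρ)^(2/(2+ρ)) * ((ε:ℝ)^2)^(ρ/(2+ρ)) = y^2 := by
    rw [Real.div_rpow (by positivity) (by positivity), ha, hb, hc,
      div_mul_cancel₀]
    exact ne_of_gt (Real.rpow_pos_of_pos hε _)
  rw [hd] at key
  exact key

lemma condexp_lin3 {Ω : Type*} {m0 : MeasurableSpace Ω} (μ : Measure Ω) [IsProbabilityMeasure μ]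
    (G : MeasurableSpace Ω) (hG : G ≤ m0) {f1 f2 f3 : Ω → ℝ}
    (h1 : Integrable f1 μ) (h2 : Integrable f2 μ) (h3 : Integrable f3 μ) (c a1 a2 a3 : ℝ) :
    μ[fun ω => c + a1 * f1 ω + a2 * f2 ω + a3 * f3 ω|G] =ᵐ[μ]
      fun ω => c + a1 * (μ[f1|G]) ω + a2 * (μ[f2|G]) ω + a3 * (μ[f3|G]) ω := by
  have i1 : Integrable (a1 • f1) μ := h1.smul a1
  have i2 : Integrable (a2 • f2) μ := h2.smul a2
  have i3 : Integrable (a3 • f3) μ := h3.smul a3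
  have ic : Integrable (fun _ : Ω => c) μ := integrable_const c
  have eA : μ[(fun _ : Ω => c) + a1 • f1 + a2 • f2 + a3 • f3|G] =ᵐ[μ]
      μ[(fun _ : Ω => c) + a1 • f1 + a2 • f2|G] + μ[a3 • f3|G] :=
    condExp_add ((ic.add i1).add i2) i3 G
  have eB : μ[(fun _ : Ω => c) + a1 • f1 + a2 • f2|G] =ᵐ[μ]
      μ[(fun _ : Ω => c) + a1 • f1|G] + μ[a2 • f2|G] := condExp_add (ic.add i1) i2 G
  have eC : μ[(fun _ : Ω => c) + a1 • f1|G] =ᵐ[μ] μ[(fun _ : Ω => c)|G] + μ[a1 • f1|G] :=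
    condExp_add ic i1 G
  have s1 : μ[a1 • f1|G] =ᵐ[μ] a1 • μ[f1|G] := condExp_smul a1 f1 G
  have s2 : μ[a2 • f2|G] =ᵐ[μ] a2 • μ[f2|G] := condExp_smul a2 f2 G
  have s3 : μ[a3 • f3|G] =ᵐ[μ] a3 • μ[f3|G] := condExp_smul a3 f3 G
  have ec : μ[(fun _ : Ω => c)|G] = fun _ => c := condExp_const hG c
  have : μ[fun ω => c + a1 * f1 ω + a2 * f2 ω + a3 * f3 ω|G]
      = μ[(fun _ : Ω => c) + a1 • f1 + a2 • f2 + a3 • f3|G] := rfl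
  rw [this]
  filter_upwards [eA, eB, eC, s1, s2, s3] with ω hA hB hC hs1 hs2 hs3
  simp only [Pi.add_apply, Pi.smul_apply, smul_eq_mul] at *
  rw [hA, hB, hC, hs1, hs2, hs3, ec]

theorem condExp_exp_le
    {Ω : Type*} {m0 : MeasurableSpace Ω} (μ : Measure Ω) [IsProbabilityMeasure μ]
    (G : MeasurableSpace Ω) (hG : G ≤ m0)
    (ξ : Ω → ℝ) (ρ ε : ℝ) (hρ0 : 0 < ρ) (hρ1 : ρ ≤ 1) (hε : 0 < ε)
    (hint : Integrable ξ μ) (hmd : μ[ξ|G] =ᵐ[μ] 0)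
    (hintsq : Integrable (fun ω => (ξ ω) ^ 2) μ)
    (hintA1 : Integrable (fun ω => |ξ ω| ^ (2 + ρ) * Real.exp (max (ξ ω) 0 / ε)) μ)
    (hA1 : ∀ᵐ ω ∂μ,
      (μ[fun ω => |ξ ω| ^ (2 + ρ) * Real.exp (max (ξ ω) 0 / ε)|G]) ω
        ≤ ε ^ ρ * (μ[fun ω => (ξ ω) ^ 2|G]) ω)
    (lam : ℝ) (hlam0 : 0 ≤ lam) (hlam1 : lam ≤ 1 / ε)
    (hintexp : Integrable (fun ω => Real.exp (lam * ξ ω)) μ) :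
    ∀ᵐ ω ∂μ,
      (μ[fun ω => Real.exp (lam * ξ ω)|G]) ω
          ≤ 1 + (lam ^ 2 / 2 + lam ^ (2 + ρ) * ε ^ ρ) * (μ[fun ω => (ξ ω) ^ 2|G]) ω
        ∧ 1 + (lam ^ 2 / 2 + lam ^ (2 + ρ) * ε ^ ρ) * (μ[fun ω => (ξ ω) ^ 2|G]) ω
          ≤ 1 + 2 * (lam * ε) ^ 2 := by
  set A1 : Ω → ℝ := fun ω => |ξ ω| ^ (2 + ρ) * Real.exp (max (ξ ω) 0 / ε) with hA1def
  have h2ρ : (0:ℝ) < 2 + ρ := by linarith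
  have hlamε : lam * ε ≤ 1 := by
    calc lam * ε ≤ (1/ε) * ε := mul_le_mul_of_nonneg_right hlam1 hε.le
    _ = 1 := by field_simp
  -- Step 1 : X := μ[ξ²|G] satisfies X ≤ ε² a.e., and X ≥ 0 a.e.
  have hXnn : ∀ᵐ ω ∂μ, 0 ≤ (μ[fun ω => (ξ ω) ^ 2|G]) ω :=
    condExp_nonneg (ae_of_all μ fun ω => sq_nonneg _)
  -- pointwise young + exp ≥ 1
  have hA1nn : ∀ ω, 0 ≤ A1 ω := fun ω => by positivity
  have hptY : ∀ ω, (ξ ω)^2 ≤ (ρ/(2+ρ))*ε^2 + (2/(2+ρ)/ε^ρ) * A1 ω + 0 * ξ ω + 0 * ξ ω := by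
    intro ω
    have h1 := young_aux hρ0 hε (ξ ω)
    have h2 : |ξ ω|^(2+ρ) ≤ A1 ω := by
      have : (1:ℝ) ≤ Real.exp (max (ξ ω) 0 / ε) := by
        rw [show (1:ℝ) = Real.exp 0 from (Real.exp_zero).symm]
        exact Real.exp_le_exp.2 (by positivity)
      simp only [hA1def]
      nlinarith [Real.rpow_nonneg (abs_nonneg (ξ ω)) (2+ρ)]
    have hdiv : (2/(2+ρ)) * (|ξ ω|^(2+ρ)/ε^ρ) ≤ (2/(2+ρ)/ε^ρ) * A1 ω := by
      have hco : (0:ℝ) ≤ 2/(2+ρ)/ε^ρ := by positivity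
      calc (2/(2+ρ)) * (|ξ ω|^(2+ρ)/ε^ρ) = (2/(2+ρ)/ε^ρ) * |ξ ω|^(2+ρ) := by ring
      _ ≤ (2/(2+ρ)/ε^ρ) * A1 ω := mul_le_mul_of_nonneg_left h2 hco
    linarith
  have hgYint : Integrable (fun ω => (ρ/(2+ρ))*ε^2 + (2/(2+ρ)/ε^ρ) * A1 ω + 0 * ξ ω + 0 * ξ ω) μ := by
    exact (((integrable_const _).add (hintA1.const_mul _)).add (hint.const_mul 0)).add
      (hint.const_mul 0)
  have hmono1 := condExp_mono (m := G) hintsq hgYint (ae_of_all μ hptY)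
  have hlinY := condexp_lin3 μ G hG hintA1 hint hint ((ρ/(2+ρ))*ε^2) (2/(2+ρ)/ε^ρ) 0 0
  have hXle : ∀ᵐ ω ∂μ, (μ[fun ω => (ξ ω) ^ 2|G]) ω ≤ ε^2 := by
    filter_upwards [hmono1, hlinY, hA1, hXnn] with ω h1 h2 h3 h4
    rw [h2] at h1
    set X := (μ[fun ω => (ξ ω) ^ 2|G]) ω
    have hc : (0:ℝ) < ε^ρ := Real.rpow_pos_of_pos hε ρ
    have h5 : (2/(2+ρ)/ε^ρ) * (μ[A1|G]) ω ≤ (2/(2+ρ)/ε^ρ) * (ε^ρ * X) := by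
      apply mul_le_mul_of_nonneg_left h3 (by positivity)
    have h6 : (2/(2+ρ)/ε^ρ) * (ε^ρ * X) = (2/(2+ρ)) * X := by
      field_simp
    have h7 : X ≤ (ρ/(2+ρ))*ε^2 + (2/(2+ρ)) * X := by
      rw [← h6]; linarith
    have h8 : (0:ℝ) < ρ/(2+ρ) := by positivity
    have h9 : 2/(2+ρ) = 1 - ρ/(2+ρ) := by
      field_simp
      ring
    rw [h9] at h7
    nlinarith
  -- Step 2 : pointwise exponential bound
  have hpt : ∀ ω, Real.exp (lam * ξ ω) ≤
      1 + lam * ξ ω + (lam^2/2) * (ξ ω)^2 + lam^(2+ρ) * A1 ω := by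
    intro ω
    have h1 := exp_le_aux hρ0 hρ1 (lam * ξ ω)
    have habs : |lam * ξ ω|^(2+ρ) = lam^(2+ρ) * |ξ ω|^(2+ρ) := by
      rw [abs_mul, abs_of_nonneg hlam0, Real.mul_rpow hlam0 (abs_nonneg _)]
    have hmax : max (lam * ξ ω) 0 ≤ max (ξ ω) 0 / ε := by
      have : max (lam * ξ ω) 0 = lam * max (ξ ω) 0 := by
        rw [mul_max_of_nonneg _ _ hlam0, mul_zero]
      rw [this, div_eq_inv_mul, ← one_div]
      exact mul_le_mul_of_nonneg_right hlam1 (le_max_right _ _)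
    have hexp : Real.exp (max (lam * ξ ω) 0) ≤ Real.exp (max (ξ ω) 0 / ε) :=
      Real.exp_le_exp.2 hmax
    have h2 : |lam * ξ ω|^(2+ρ) * Real.exp (max (lam * ξ ω) 0)
        ≤ lam^(2+ρ) * A1 ω := by
      rw [habs, hA1def, mul_assoc]
      apply mul_le_mul_of_nonneg_left _ (Real.rpow_nonneg hlam0 _)
      exact mul_le_mul_of_nonneg_left hexp (Real.rpow_nonneg (abs_nonneg _) _)
    have h3 : (lam * ξ ω)^2/2 = (lam^2/2) * (ξ ω)^2 := by ring
    linarith [h1, h2, h3.le]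
  have hgint : Integrable (fun ω => 1 + lam * ξ ω + (lam^2/2) * (ξ ω)^2 + lam^(2+ρ) * A1 ω) μ :=
    (((integrable_const _).add (hint.const_mul _)).add (hintsq.const_mul _)).add
      (hintA1.const_mul _)
  have hmono2 := condExp_mono (m := G) hintexp hgint (ae_of_all μ hpt)
  have hlin := condexp_lin3 μ G hG hint hintsq hintA1 1 lam (lam^2/2) (lam^(2+ρ))
  -- coefficient bound
  have hcoef : lam^(2+ρ) * ε^ρ ≤ lam^2 := by
    have h1 : lam^(2+ρ) = lam^(2:ℝ) * lam^ρ := Real.rpow_add' hlam0 (by linarith)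
    have h2 : lam^(2:ℝ) = lam^2 := by
      rw [show ((2:ℝ)) = ((2:ℕ):ℝ) by norm_num, Real.rpow_natCast]
    have h3 : lam^ρ * ε^ρ = (lam*ε)^ρ := (Real.mul_rpow hlam0 hε.le).symm
    have h4 : (lam*ε)^ρ ≤ 1 :=
      Real.rpow_le_one (by positivity) hlamε hρ0.le
    calc lam^(2+ρ) * ε^ρ = lam^2 * (lam^ρ * ε^ρ) := by rw [h1, h2, mul_assoc]
    _ = lam^2 * (lam*ε)^ρ := by rw [h3]
    _ ≤ lam^2 * 1 := mul_le_mul_of_nonneg_left h4 (sq_nonneg _)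
    _ = lam^2 := mul_one _
  filter_upwards [hmono2, hlin, hA1, hmd, hXnn, hXle] with ω h1 h2 h3 h4 h5 h6
  rw [h2] at h1
  simp only [Pi.zero_apply] at h4
  rw [h4, mul_zero] at h1
  set X := (μ[fun ω => (ξ ω) ^ 2|G]) ω
  have hlr : (0:ℝ) ≤ lam^(2+ρ) := Real.rpow_nonneg hlam0 _
  have h7 : lam^(2+ρ) * (μ[A1|G]) ω ≤ lam^(2+ρ) * (ε^ρ * X) :=
    mul_le_mul_of_nonneg_left h3 hlr
  constructor
  · calc (μ[fun ω => Real.exp (lam * ξ ω)|G]) ω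
        ≤ 1 + 0 + (lam^2/2) * X + lam^(2+ρ) * (μ[A1|G]) ω := h1
    _ ≤ 1 + 0 + (lam^2/2) * X + lam^(2+ρ) * ε^ρ * X := by rw [mul_assoc]; linarith
    _ = 1 + (lam^2/2 + lam^(2+ρ) * ε^ρ) * X := by ring
  · have hck : (0:ℝ) ≤ lam^2/2 + lam^(2+ρ) * ε^ρ := by positivity
    have h8 : (lam^2/2 + lam^(2+ρ) * ε^ρ) * X ≤ (lam^2/2 + lam^(2+ρ) * ε^ρ) * ε^2 :=
      mul_le_mul_of_nonneg_left h6 hck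
    have h9 : (lam^2/2 + lam^(2+ρ) * ε^ρ) * ε^2 ≤ (3/2 * lam^2) * ε^2 := by
      nlinarith [sq_nonneg ε]
    have h10 : (3/2 * lam^2) * ε^2 ≤ 2 * (lam * ε)^2 := by
      rw [mul_pow]; nlinarith [sq_nonneg lam, sq_nonneg ε, sq_nonneg (lam*ε)]
    linarith
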